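/- arXiv:2204.11468 — 3 statements merged into one kernel-verified Lean document; each statement's English description precedes it below -/
import Mathlib

section
/- Let d ≥ 1 be an integer, r > 0, t ≥ r², and x ∈ ℝ^d. Then ∫_{{y : ‖y‖ ≤ r}} (2πt)^{-d/2} e^{-‖y-x‖²/(2t)} dy ≥ e^{-3/2} v_d r^d (2πt)^{-d/2} e^{-3‖x‖²/(2t)}; equivalently, the left-hand side is at least e^{-3/2} 3^{-d/2} v_d r^d (2πt/3)^{-d/2} e^{-‖x‖²/(2(t/3))}. -/
open MeasureTheory Filter Set Metric
open scoped ENNReal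

/-- The `d`-dimensional heat kernel `p_t(x,y) = (2πt)^{-d/2} exp(-‖x-y‖²/(2t))`. -/
noncomputable def heatKernel (d : ℕ) (t : ℝ) (x y : EuclideanSpace ℝ (Fin d)) : ℝ :=
  (2 * Real.pi * t) ^ (-(d : ℝ) / 2) * Real.exp (-‖x - y‖ ^ 2 / (2 * t))

/-- `u : (0,∞) × ℝ^d → [0,∞)` is a mild solution of `∂ₜu = (1/2)Δu - u²` with initial
data `φ` if it is measurable, nonnegative, and satisfies for all `t > 0`, `x ∈ ℝ^d`:
`u(t,x) + ∫₀ᵗ ∫ p_s(x,y) u(t-s,y)² dy ds = ∫ p_t(x,y) φ(y) dy` (equality in `[0,∞]`). -/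
def IsMildSolution (d : ℕ) (φ : EuclideanSpace ℝ (Fin d) → ℝ)
    (u : ℝ → EuclideanSpace ℝ (Fin d) → ℝ) : Prop :=
  Measurable (Function.uncurry u) ∧
  (∀ t x, 0 ≤ u t x) ∧
  ∀ t x, 0 < t →
    ENNReal.ofReal (u t x) +
        (∫⁻ s in Set.Ioo (0 : ℝ) t, ∫⁻ y,
          ENNReal.ofReal (heatKernel d s x y * u (t - s) y ^ 2)) =
      ∫⁻ y, ENNReal.ofReal (heatKernel d t x y * φ y)

/-- `v_d`: the Lebesgue volume of the unit ball of `ℝ^d`. -/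
noncomputable def unitBallVol (d : ℕ) : ℝ :=
  (volume (Metric.ball (0 : EuclideanSpace ℝ (Fin d)) 1)).toReal

/-- Gaussian lower bound for the heat-kernel mass of the ball `B(r)`
when `t ≥ r²`. -/
theorem stmt_5 (d : ℕ) (hd : 1 ≤ d) (r t : ℝ) (hr : 0 < r) (ht : r ^ 2 ≤ t)
    (x : EuclideanSpace ℝ (Fin d)) :
    (∫ y in {y : EuclideanSpace ℝ (Fin d) | ‖y‖ ≤ r},
        (2 * Real.pi * t) ^ (-(d : ℝ) / 2) * Real.exp (-‖y - x‖ ^ 2 / (2 * t))) ≥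
      Real.exp (-3 / 2) * unitBallVol d * r ^ d *
        (2 * Real.pi * t) ^ (-(d : ℝ) / 2) * Real.exp (-3 * ‖x‖ ^ 2 / (2 * t)) := by
  have ht0 : 0 < t := lt_of_lt_of_le (by positivity) ht
  have hpi : 0 < 2 * Real.pi * t := by positivity
  have hC : 0 < (2 * Real.pi * t) ^ (-(d : ℝ) / 2) := Real.rpow_pos_of_pos hpi _
  have hset : {y : EuclideanSpace ℝ (Fin d) | ‖y‖ ≤ r} =
      Metric.closedBall (0 : EuclideanSpace ℝ (Fin d)) r := by
    ext y; simp [Metric.mem_closedBall, dist_zero_right]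
  set c : ℝ := Real.exp (-3 / 2) * (2 * Real.pi * t) ^ (-(d : ℝ) / 2) *
      Real.exp (-3 * ‖x‖ ^ 2 / (2 * t)) with hc
  have key : ∀ y ∈ Metric.closedBall (0 : EuclideanSpace ℝ (Fin d)) r,
      c ≤ (2 * Real.pi * t) ^ (-(d : ℝ) / 2) * Real.exp (-‖y - x‖ ^ 2 / (2 * t)) := by
    intro y hy
    rw [Metric.mem_closedBall, dist_zero_right] at hy
    have h1 : ‖y - x‖ ≤ ‖y‖ + ‖x‖ := norm_sub_le y x
    have h2 : ‖y - x‖ ^ 2 ≤ 3 * t + 3 * ‖x‖ ^ 2 := by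
      nlinarith [norm_nonneg (y - x), norm_nonneg x, norm_nonneg y,
        sq_nonneg (‖x‖ - 2 * ‖y‖)]
    have e : -‖y - x‖ ^ 2 / (2 * t) - (-3 / 2 + -3 * ‖x‖ ^ 2 / (2 * t)) =
        (3 * t + 3 * ‖x‖ ^ 2 - ‖y - x‖ ^ 2) / (2 * t) := by
      field_simp; ring
    have hlin : -3 / 2 + -3 * ‖x‖ ^ 2 / (2 * t) ≤ -‖y - x‖ ^ 2 / (2 * t) := by
      have := div_nonneg (by linarith : (0:ℝ) ≤ 3 * t + 3 * ‖x‖ ^ 2 - ‖y - x‖ ^ 2)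
        (by linarith : (0:ℝ) ≤ 2 * t)
      linarith [e]
    have hexp : Real.exp (-3 / 2) * Real.exp (-3 * ‖x‖ ^ 2 / (2 * t)) ≤
        Real.exp (-‖y - x‖ ^ 2 / (2 * t)) := by
      rw [← Real.exp_add]; exact Real.exp_le_exp.mpr hlin
    calc c = (2 * Real.pi * t) ^ (-(d : ℝ) / 2) *
          (Real.exp (-3 / 2) * Real.exp (-3 * ‖x‖ ^ 2 / (2 * t))) := by rw [hc]; ring
      _ ≤ (2 * Real.pi * t) ^ (-(d : ℝ) / 2) * Real.exp (-‖y - x‖ ^ 2 / (2 * t)) :=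
          mul_le_mul_of_nonneg_left hexp hC.le
  have hvol : (volume (Metric.closedBall (0 : EuclideanSpace ℝ (Fin d)) r)).toReal =
      r ^ d * unitBallVol d := by
    rw [Measure.addHaar_closedBall _ _ hr.le, ENNReal.toReal_mul,
      ENNReal.toReal_ofReal (by positivity)]
    simp [unitBallVol, finrank_euclideanSpace_fin]
  have hint : IntegrableOn
      (fun y : EuclideanSpace ℝ (Fin d) =>
        (2 * Real.pi * t) ^ (-(d : ℝ) / 2) * Real.exp (-‖y - x‖ ^ 2 / (2 * t)))
      (Metric.closedBall (0 : EuclideanSpace ℝ (Fin d)) r) volume := by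
    apply ContinuousOn.integrableOn_compact (isCompact_closedBall _ _)
    apply Continuous.continuousOn
    continuity
  have hmono : ∫ y in Metric.closedBall (0 : EuclideanSpace ℝ (Fin d)) r, c ≤
      ∫ y in Metric.closedBall (0 : EuclideanSpace ℝ (Fin d)) r,
        (2 * Real.pi * t) ^ (-(d : ℝ) / 2) * Real.exp (-‖y - x‖ ^ 2 / (2 * t)) := by
    apply setIntegral_mono_on ((integrableOn_const_iff (C := c)).mpr
      (Or.inr measure_closedBall_lt_top)) hint measurableSet_closedBall key
  rw [hset]
  have hconst : ∫ _y in Metric.closedBall (0 : EuclideanSpace ℝ (Fin d)) r, c =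
      r ^ d * unitBallVol d * c := by
    rw [setIntegral_const, smul_eq_mul, measureReal_def, hvol]
  calc Real.exp (-3 / 2) * unitBallVol d * r ^ d *
        (2 * Real.pi * t) ^ (-(d : ℝ) / 2) * Real.exp (-3 * ‖x‖ ^ 2 / (2 * t))
      = r ^ d * unitBallVol d * c := by rw [hc]; ring
    _ ≤ _ := by rw [← hconst]; exact hmono
end

section
/- Let d ≥ 3 be an integer, r > 0, t ≥ r², and x ∈ ℝ^d. Then ∫₀^t ∫_{ℝ^d} p_s(x,y) (∫_{{z : ‖z‖ ≤ r}} p_{t-s}(y,z) dz)² dy ds ≤ 3 r² ∫_{{z : ‖z‖ ≤ r}} p_t(x,z) dz. -/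
open MeasureTheory Filter Set Metric
open scoped ENNReal

variable {d : ℕ}

lemma hk_nonneg {t : ℝ} (ht : 0 < t) (x y : EuclideanSpace ℝ (Fin d)) :
    0 ≤ heatKernel d t x y := by
  unfold heatKernel
  have : (0:ℝ) < 2 * Real.pi * t := by positivity
  positivity

lemma hk_cont {t : ℝ} (x : EuclideanSpace ℝ (Fin d)) :
    Continuous (fun y => heatKernel d t x y) := by
  unfold heatKernel
  fun_prop

lemma hk_cont2 {t : ℝ} :
    Continuous (fun p : EuclideanSpace ℝ (Fin d) × EuclideanSpace ℝ (Fin d) =>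
      heatKernel d t p.1 p.2) := by
  unfold heatKernel
  fun_prop

lemma exp_integrable {b : ℝ} (hb : 0 < b) :
    Integrable (fun y : EuclideanSpace ℝ (Fin d) => Real.exp (-b * ‖y‖ ^ 2)) := by
  have := GaussianFourier.integrable_cexp_neg_mul_sq_norm_add
    (V := EuclideanSpace ℝ (Fin d)) (b := (b:ℂ)) (by simpa using hb) 0 0
  have h := this.norm
  simp only [Complex.norm_exp] at h
  refine h.congr (Eventually.of_forall fun y => ?_)
  norm_num
  left
  norm_cast

lemma hk_integrable {t : ℝ} (ht : 0 < t) (x : EuclideanSpace ℝ (Fin d)) :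
    Integrable (fun y => heatKernel d t x y) := by
  unfold heatKernel
  apply Integrable.const_mul
  have h1 : Integrable (fun y : EuclideanSpace ℝ (Fin d) =>
      Real.exp (-(1/(2*t)) * ‖y‖ ^ 2)) := exp_integrable (by positivity)
  have h2 := h1.comp_sub_left x
  convert h2 using 2 with y
  field_simp

lemma exp_integral {b : ℝ} (hb : 0 < b) :
    ∫ y : EuclideanSpace ℝ (Fin d), Real.exp (-b * ‖y‖ ^ 2) =
      (Real.pi / b) ^ ((d : ℝ) / 2) := by
  have := GaussianFourier.integral_rexp_neg_mul_sq_norm (V := EuclideanSpace ℝ (Fin d)) hb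
  simpa [finrank_euclideanSpace_fin] using this

lemma hk_integral {t : ℝ} (ht : 0 < t) (x : EuclideanSpace ℝ (Fin d)) :
    ∫ y, heatKernel d t x y = 1 := by
  unfold heatKernel
  rw [integral_const_mul]
  have h1 : ∀ y : EuclideanSpace ℝ (Fin d),
      Real.exp (-‖x - y‖ ^ 2 / (2 * t)) = Real.exp (-(1/(2*t)) * ‖x - y‖ ^ 2) := by
    intro y; congr 1; field_simp
  simp_rw [h1]
  rw [integral_sub_left_eq_self (fun y : EuclideanSpace ℝ (Fin d) =>
      Real.exp (-(1/(2*t)) * ‖y‖ ^ 2)) volume x]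
  rw [exp_integral (by positivity)]
  have h2 : Real.pi / (1/(2*t)) = 2 * Real.pi * t := by field_simp
  rw [h2]
  rw [← Real.rpow_add (by positivity)]
  rw [show -(d:ℝ)/2 + (d:ℝ)/2 = 0 by ring, Real.rpow_zero]

lemma hk_prod {s u : ℝ} (hs : 0 < s) (hu : 0 < u) (x y z : EuclideanSpace ℝ (Fin d)) :
    heatKernel d s x y * heatKernel d u y z =
      heatKernel d (s + u) x z *
        heatKernel d (s * u / (s + u)) ((s + u)⁻¹ • (u • x + s • z)) y := by
  have hsu : 0 < s + u := by linarith
  have hv : 0 < s * u / (s + u) := by positivity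
  set a := x - y with ha
  set b := y - z with hb
  set m := (s + u)⁻¹ • (u • x + s • z) with hm
  have h1 : ‖x - z‖ ^ 2 = ‖a‖ ^ 2 + 2 * (inner ℝ a b : ℝ) + ‖b‖ ^ 2 := by
    have hxz : x - z = a + b := by rw [ha, hb]; abel
    rw [hxz, norm_add_sq_real]
  have hmy : m - y = (s + u)⁻¹ • (u • a - s • b) := by
    rw [hm, ha, hb]
    have hne : s + u ≠ 0 := ne_of_gt hsu
    match_scalars <;> field_simp <;> ring
  have h2 : ‖m - y‖ ^ 2 =
      ((s+u)⁻¹)^2 * (u^2 * ‖a‖^2 - 2 * (u * s) * (inner ℝ a b : ℝ) + s^2 * ‖b‖^2) := by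
    rw [hmy, norm_smul, mul_pow, Real.norm_eq_abs, sq_abs]
    congr 1
    rw [norm_sub_sq_real, norm_smul, norm_smul, real_inner_smul_left, real_inner_smul_right,
      Real.norm_eq_abs, Real.norm_eq_abs, abs_of_pos hu, abs_of_pos hs, mul_pow, mul_pow]
    ring
  unfold heatKernel
  rw [show (2 * Real.pi * s) ^ (-(d:ℝ)/2) * Real.exp (-‖x - y‖ ^ 2 / (2 * s)) *
        ((2 * Real.pi * u) ^ (-(d:ℝ)/2) * Real.exp (-‖y - z‖ ^ 2 / (2 * u))) =
      ((2 * Real.pi * s) ^ (-(d:ℝ)/2) * (2 * Real.pi * u) ^ (-(d:ℝ)/2)) *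
        (Real.exp (-‖x - y‖ ^ 2 / (2 * s)) * Real.exp (-‖y - z‖ ^ 2 / (2 * u))) by ring]
  rw [show (2 * Real.pi * (s+u)) ^ (-(d:ℝ)/2) * Real.exp (-‖x - z‖ ^ 2 / (2 * (s+u))) *
        ((2 * Real.pi * (s*u/(s+u))) ^ (-(d:ℝ)/2) * Real.exp (-‖m - y‖ ^ 2 / (2 * (s*u/(s+u))))) =
      ((2 * Real.pi * (s+u)) ^ (-(d:ℝ)/2) * (2 * Real.pi * (s*u/(s+u))) ^ (-(d:ℝ)/2)) *
        (Real.exp (-‖x - z‖ ^ 2 / (2 * (s+u))) * Real.exp (-‖m - y‖ ^ 2 / (2 * (s*u/(s+u))))) by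
        ring]
  congr 1
  · rw [← Real.mul_rpow (by positivity) (by positivity),
      ← Real.mul_rpow (by positivity) (by positivity)]
    congr 1
    field_simp
  · rw [← Real.exp_add, ← Real.exp_add]
    congr 1
    have hy : y - z = b := hb.symm
    rw [h1, h2, ha]
    field_simp
    ring

lemma hk_ck {s u : ℝ} (hs : 0 < s) (hu : 0 < u) (x z : EuclideanSpace ℝ (Fin d)) :
    ∫ y, heatKernel d s x y * heatKernel d u y z = heatKernel d (s + u) x z := by
  have hv : 0 < s * u / (s + u) := by positivity
  simp_rw [hk_prod hs hu x _ z]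
  rw [integral_const_mul, hk_integral hv, mul_one]

variable (d) in
noncomputable def ballSet (r : ℝ) : Set (EuclideanSpace ℝ (Fin d)) := {z | ‖z‖ ≤ r}

lemma ballSet_meas (r : ℝ) : MeasurableSet (ballSet d r) :=
  (isClosed_le continuous_norm continuous_const).measurableSet

lemma ballSet_vol {r : ℝ} (hr : 0 < r) :
    volume (ballSet d r) ≤ ENNReal.ofReal ((2*r)^d) := by
  have hsub : ballSet d r ⊆
      (MeasurableEquiv.toLp 2 (Fin d → ℝ)).symm ⁻¹' (Set.pi Set.univ fun _ : Fin d => Icc (-r) r) := by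
    intro z hz
    intro i _
    simp only [Set.mem_Icc]
    have h1 : |z i| ≤ ‖z‖ := by
      rw [EuclideanSpace.norm_eq]
      rw [← Real.sqrt_sq_eq_abs]
      apply Real.sqrt_le_sqrt
      simp only [Real.norm_eq_abs, sq_abs]
      exact Finset.single_le_sum (f := fun j => (z j)^2) (fun j _ => sq_nonneg _) (Finset.mem_univ i)
    have h2 : |z i| ≤ r := le_trans h1 hz
    have h3 := abs_le.mp h2
    exact ⟨h3.1, h3.2⟩
  calc volume (ballSet d r) ≤ volume ((MeasurableEquiv.toLp 2 (Fin d → ℝ)).symm ⁻¹'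
        (Set.pi Set.univ fun _ : Fin d => Icc (-r) r)) := measure_mono hsub
    _ = volume (Set.pi Set.univ fun _ : Fin d => Icc (-r) r) := by
        rw [(EuclideanSpace.volume_preserving_symm_measurableEquiv_toLp (Fin d)).measure_preimage
          ((MeasurableSet.univ_pi (fun _ => measurableSet_Icc)).nullMeasurableSet)]
    _ = ENNReal.ofReal ((2*r)^d) := by
        rw [volume_pi_pi]
        simp only [Real.volume_Icc]
        rw [Finset.prod_const, Finset.card_univ, Fintype.card_fin]
        rw [← ENNReal.ofReal_pow (by linarith)]
        congr 1
        ring_nf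

lemma hk_le_const {u : ℝ} (hu : 0 < u) (y z : EuclideanSpace ℝ (Fin d)) :
    heatKernel d u y z ≤ (2 * Real.pi * u) ^ (-(d:ℝ)/2) := by
  unfold heatKernel
  have h1 : Real.exp (-‖y - z‖ ^ 2 / (2 * u)) ≤ 1 := by
    rw [Real.exp_le_one_iff]
    have : (0:ℝ) ≤ ‖y - z‖^2 := sq_nonneg _
    apply div_nonpos_of_nonpos_of_nonneg <;> [linarith; positivity]
  calc (2 * Real.pi * u) ^ (-(d:ℝ)/2) * Real.exp (-‖y - z‖ ^ 2 / (2 * u))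
      ≤ (2 * Real.pi * u) ^ (-(d:ℝ)/2) * 1 := by
        apply mul_le_mul_of_nonneg_left h1 (Real.rpow_nonneg (by positivity) _)
    _ = _ := mul_one _

lemma h_nonneg {u r : ℝ} (hu : 0 < u) (y : EuclideanSpace ℝ (Fin d)) :
    0 ≤ ∫ z in ballSet d r, heatKernel d u y z :=
  integral_nonneg fun z => hk_nonneg hu y z

lemma h_le_one {u r : ℝ} (hu : 0 < u) (y : EuclideanSpace ℝ (Fin d)) :
    ∫ z in ballSet d r, heatKernel d u y z ≤ 1 := by
  calc ∫ z in ballSet d r, heatKernel d u y z ≤ ∫ z, heatKernel d u y z :=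
      setIntegral_le_integral (hk_integrable hu y)
        (Eventually.of_forall fun z => hk_nonneg hu y z)
    _ = 1 := hk_integral hu y

lemma h_le_vol {u r : ℝ} (hu : 0 < u) (hr : 0 < r) (y : EuclideanSpace ℝ (Fin d)) :
    ∫ z in ballSet d r, heatKernel d u y z ≤ (2 * Real.pi * u) ^ (-(d:ℝ)/2) * (2*r)^d := by
  have hvol : volume (ballSet d r) < ⊤ :=
    lt_of_le_of_lt (ballSet_vol hr) ENNReal.ofReal_lt_top
  have hb := norm_setIntegral_le_of_norm_le_const (f := fun z => heatKernel d u y z)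
    (C := (2 * Real.pi * u) ^ (-(d:ℝ)/2)) hvol
    (fun z _ => by
      rw [Real.norm_eq_abs, abs_of_nonneg (hk_nonneg hu y z)]
      exact hk_le_const hu y z)
  have h2 : (volume (ballSet d r)).toReal ≤ (2*r)^d := by
    refine ENNReal.toReal_le_of_le_ofReal (by positivity) (ballSet_vol hr)
  calc ∫ z in ballSet d r, heatKernel d u y z
      ≤ ‖∫ z in ballSet d r, heatKernel d u y z‖ := le_abs_self _
    _ ≤ (2 * Real.pi * u) ^ (-(d:ℝ)/2) * (volume (ballSet d r)).toReal := hb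
    _ ≤ (2 * Real.pi * u) ^ (-(d:ℝ)/2) * (2*r)^d :=
        mul_le_mul_of_nonneg_left h2 (Real.rpow_nonneg (by positivity) _)

lemma h_meas {u r : ℝ} :
    StronglyMeasurable (fun y : EuclideanSpace ℝ (Fin d) =>
      ∫ z in ballSet d r, heatKernel d u y z) :=
  StronglyMeasurable.integral_prod_right (ν := volume.restrict (ballSet d r))
    (f := fun y z => heatKernel d u y z) hk_cont2.stronglyMeasurable

lemma const_eq {u r : ℝ} (hu : 0 < u) (hr : 0 < r) :
    (2 * Real.pi * u) ^ (-(d:ℝ)/2) * (2*r)^d = ((2*r^2/Real.pi)/u) ^ ((d:ℝ)/2) := by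
  have h2r : (0:ℝ) < 2*r := by linarith
  have hpi : (0:ℝ) < 2 * Real.pi * u := by positivity
  have h1 : (((2*r)^2 : ℝ)) ^ ((d:ℝ)/2) = (2*r)^d := by
    rw [← Real.rpow_natCast (2*r) 2, ← Real.rpow_mul h2r.le,
      show ((2:ℕ):ℝ) * ((d:ℝ)/2) = (d:ℝ) by push_cast; ring, Real.rpow_natCast]
  rw [← h1, show -(d:ℝ)/2 = -((d:ℝ)/2) by ring, Real.rpow_neg hpi.le, ← Real.inv_rpow hpi.le, ← Real.mul_rpow (by positivity)
    (by positivity)]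
  congr 1
  have hpine : Real.pi ≠ 0 := ne_of_gt Real.pi_pos
  field_simp

lemma h_le_M (hd : 3 ≤ d) {u r : ℝ} (hu : 0 < u) (hr : 0 < r)
    (y : EuclideanSpace ℝ (Fin d)) :
    ∫ z in ballSet d r, heatKernel d u y z ≤
      min 1 (((2*r^2/Real.pi)/u) ^ ((3:ℝ)/2)) := by
  set q : ℝ := (2*r^2/Real.pi)/u with hq
  have hq0 : 0 < q := by positivity
  refine le_min (h_le_one hu y) ?_
  rcases le_or_gt q 1 with hq1 | hq1
  · calc ∫ z in ballSet d r, heatKernel d u y z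
        ≤ (2 * Real.pi * u) ^ (-(d:ℝ)/2) * (2*r)^d := h_le_vol hu hr y
      _ = q ^ ((d:ℝ)/2) := const_eq hu hr
      _ ≤ q ^ ((3:ℝ)/2) := by
          apply Real.rpow_le_rpow_of_exponent_ge hq0 hq1
          have : (3:ℝ) ≤ (d:ℝ) := by exact_mod_cast hd
          linarith
  · calc ∫ z in ballSet d r, heatKernel d u y z ≤ 1 := h_le_one hu y
      _ ≤ q ^ ((3:ℝ)/2) := Real.one_le_rpow hq1.le (by norm_num)

lemma h_mul_integrable {s u r : ℝ} (hs : 0 < s) (hu : 0 < u) (hr : 0 < r)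
    (x : EuclideanSpace ℝ (Fin d)) :
    Integrable (fun y => heatKernel d s x y * ∫ z in ballSet d r, heatKernel d u y z) := by
  have h := (hk_integrable hs x).bdd_mul
    (c := 1)
    (f := fun y => ∫ z in ballSet d r, heatKernel d u y z)
    (h_meas.aestronglyMeasurable)
    (Eventually.of_forall fun y => by
      rw [Real.norm_eq_abs, abs_of_nonneg (h_nonneg hu y)]
      exact h_le_one hu y)
  refine h.congr (Eventually.of_forall fun y => ?_)
  ring

lemma fubini_ck {s u r : ℝ} (hs : 0 < s) (hu : 0 < u) (hr : 0 < r)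
    (x : EuclideanSpace ℝ (Fin d)) :
    ∫ y, heatKernel d s x y * ∫ z in ballSet d r, heatKernel d u y z =
      ∫ z in ballSet d r, heatKernel d (s + u) x z := by
  have hvol : volume (ballSet d r) < ⊤ :=
    lt_of_le_of_lt (ballSet_vol hr) ENNReal.ofReal_lt_top
  set F : EuclideanSpace ℝ (Fin d) → EuclideanSpace ℝ (Fin d) → ℝ :=
    fun y z => heatKernel d s x y * heatKernel d u y z with hF
  have hFc : Continuous (Function.uncurry F) := by
    apply Continuous.mul
    · exact (hk_cont (t := s) x).comp continuous_fst
    · exact hk_cont2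
  have hFmeas : AEStronglyMeasurable (Function.uncurry F)
      (volume.prod (volume.restrict (ballSet d r))) :=
    hFc.aestronglyMeasurable
  have hFint : Integrable (Function.uncurry F) (volume.prod (volume.restrict (ballSet d r))) := by
    rw [integrable_prod_iff hFmeas]
    constructor
    · refine Eventually.of_forall fun y => ?_
      refine Integrable.mono' (g := fun _ => heatKernel d s x y * (2 * Real.pi * u) ^ (-(d:ℝ)/2))
        (integrableOn_const hvol.ne) ?_ ?_
      · exact ((hk_cont (t := s) x).comp continuous_const).mul (hk_cont (t := u) y)
          |>.aestronglyMeasurable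
      · refine Eventually.of_forall fun z => ?_
        show |F y z| ≤ _
        rw [hF]
        simp only
        rw [abs_of_nonneg (mul_nonneg (hk_nonneg hs x y) (hk_nonneg hu y z))]
        exact mul_le_mul_of_nonneg_left (hk_le_const hu y z) (hk_nonneg hs x y)
    · refine (h_mul_integrable hs hu hr x).congr (Eventually.of_forall fun y => ?_)
      simp only
      rw [← integral_const_mul]
      congr 1 with z
      show heatKernel d s x y * heatKernel d u y z = ‖F y z‖
      rw [hF]
      simp only [Real.norm_eq_abs]
      rw [abs_of_nonneg (mul_nonneg (hk_nonneg hs x y) (hk_nonneg hu y z))]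
  calc ∫ y, heatKernel d s x y * ∫ z in ballSet d r, heatKernel d u y z
      = ∫ y, ∫ z in ballSet d r, F y z := by
        congr 1 with y
        rw [← integral_const_mul]
    _ = ∫ z in ballSet d r, ∫ y, F y z := integral_integral_swap hFint
    _ = ∫ z in ballSet d r, heatKernel d (s + u) x z := by
        refine setIntegral_congr_fun (ballSet_meas r) fun z _ => ?_
        exact hk_ck hs hu x z

lemma time_int {r t : ℝ} (hr : 0 < r) (ht : r ^ 2 ≤ t) :
    ∫ s in Ioo (0:ℝ) t, min 1 (((2*r^2/Real.pi)/(t-s)) ^ ((3:ℝ)/2)) ≤ 3 * r^2 := by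
  set u₀ : ℝ := 2*r^2/Real.pi with hu₀
  have hu₀0 : 0 < u₀ := by positivity
  have hpi2 : (2:ℝ) ≤ Real.pi := by linarith [Real.pi_gt_three]
  have hu₀r : u₀ ≤ r^2 := by
    rw [hu₀, div_le_iff₀ Real.pi_pos]
    nlinarith [sq_nonneg r]
  have hu₀t : u₀ ≤ t := le_trans hu₀r ht
  have ht0 : 0 < t := lt_of_lt_of_le hu₀0 hu₀t
  set M : ℝ → ℝ := fun u => min 1 ((u₀/u) ^ ((3:ℝ)/2)) with hM
  have hMmeas : Measurable M := by
    apply Measurable.min measurable_const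
    exact ((Real.continuous_rpow_const (by norm_num)).measurable).comp
      (measurable_const.div measurable_id)
  have hMle1 : ∀ u, M u ≤ 1 := fun u => min_le_left _ _
  have hM0 : ∀ u, 0 ≤ u → 0 ≤ M u := by
    intro u hu
    refine le_min (by norm_num) (Real.rpow_nonneg ?_ _)
    positivity
  have hMint : ∀ a b : ℝ, 0 ≤ a → 0 ≤ b → IntervalIntegrable M volume a b := by
    intro a b ha hb
    rw [intervalIntegrable_iff]
    refine Integrable.mono' (g := fun _ => (1:ℝ)) (integrableOn_const measure_Ioc_lt_top.ne) (hMmeas.aestronglyMeasurable.restrict) ?_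
    filter_upwards [ae_restrict_mem measurableSet_Ioc] with u hu
    have hu0 : 0 ≤ u := le_trans (le_min ha hb) hu.1.le
    rw [Real.norm_eq_abs, abs_of_nonneg (hM0 u hu0)]
    simpa using hMle1 u
  have step1 : (∫ s in Ioo (0:ℝ) t, M (t - s)) = ∫ u in (0:ℝ)..t, M u := by
    rw [← integral_Ioc_eq_integral_Ioo, ← intervalIntegral.integral_of_le ht0.le]
    rw [intervalIntegral.integral_comp_sub_left M t]
    norm_num
  refine le_trans (le_of_eq step1) ?_
  have hsplit : ∫ u in (0:ℝ)..t, M u = (∫ u in (0:ℝ)..u₀, M u) + ∫ u in u₀..t, M u :=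
    (intervalIntegral.integral_add_adjacent_intervals
      (hMint 0 u₀ le_rfl hu₀0.le) (hMint u₀ t hu₀0.le ht0.le)).symm
  rw [hsplit]
  have hb1 : ∫ u in (0:ℝ)..u₀, M u ≤ u₀ := by
    calc ∫ u in (0:ℝ)..u₀, M u ≤ ∫ _u in (0:ℝ)..u₀, (1:ℝ) :=
        intervalIntegral.integral_mono_on hu₀0.le (hMint 0 u₀ le_rfl hu₀0.le)
          intervalIntegrable_const (fun u _ => hMle1 u)
      _ = u₀ := by simp
  have hnotmem : (0:ℝ) ∉ Set.uIcc u₀ t := by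
    rw [Set.uIcc_of_le hu₀t, Set.mem_Icc]
    push_neg
    intro h
    exact absurd h (not_le.2 hu₀0)
  have hg_int : IntervalIntegrable (fun u : ℝ => u₀ ^ ((3:ℝ)/2) * u ^ ((-(3/2):ℝ)))
      volume u₀ t :=
    (intervalIntegral.intervalIntegrable_rpow (Or.inr hnotmem)).const_mul _
  have hb2 : ∫ u in u₀..t, M u ≤ ∫ u in u₀..t, u₀ ^ ((3:ℝ)/2) * u ^ ((-(3/2):ℝ)) := by
    refine intervalIntegral.integral_mono_on hu₀t (hMint u₀ t hu₀0.le ht0.le) hg_int ?_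
    intro u hu
    have hu0 : 0 < u := lt_of_lt_of_le hu₀0 hu.1
    calc M u ≤ (u₀/u) ^ ((3:ℝ)/2) := min_le_right _ _
      _ = u₀ ^ ((3:ℝ)/2) * u ^ ((-(3/2):ℝ)) := by
          rw [Real.div_rpow hu₀0.le hu0.le, Real.rpow_neg hu0.le, div_eq_mul_inv]
  have hb2' : ∫ u in u₀..t, u₀ ^ ((3:ℝ)/2) * u ^ ((-(3/2):ℝ)) ≤ 2 * u₀ := by
    rw [intervalIntegral.integral_const_mul]
    rw [integral_rpow (Or.inr ⟨by norm_num, hnotmem⟩)]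
    have he : ((-(3/2):ℝ) + 1) = -(1/2 : ℝ) := by norm_num
    rw [he]
    have h1 : (t ^ (-(1/2):ℝ) - u₀ ^ (-(1/2):ℝ)) / -(1/2) =
        2 * (u₀ ^ (-(1/2):ℝ) - t ^ (-(1/2):ℝ)) := by ring
    rw [h1]
    have h2 : u₀ ^ ((3:ℝ)/2) * (2 * (u₀ ^ (-(1/2):ℝ) - t ^ (-(1/2):ℝ))) ≤
        u₀ ^ ((3:ℝ)/2) * (2 * u₀ ^ (-(1/2):ℝ)) := by
      apply mul_le_mul_of_nonneg_left _ (Real.rpow_nonneg hu₀0.le _)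
      have : (0:ℝ) ≤ t ^ (-(1/2):ℝ) := Real.rpow_nonneg ht0.le _
      linarith
    refine le_trans h2 ?_
    rw [show u₀ ^ ((3:ℝ)/2) * (2 * u₀ ^ (-(1/2):ℝ)) =
        2 * (u₀ ^ ((3:ℝ)/2) * u₀ ^ (-(1/2):ℝ)) by ring]
    rw [← Real.rpow_add hu₀0]
    norm_num
  have hfinal : u₀ + 2 * u₀ ≤ 3 * r^2 := by
    have h : u₀ + 2*u₀ = 6*r^2/Real.pi := by rw [hu₀]; ring
    rw [h, div_le_iff₀ Real.pi_pos]
    nlinarith [sq_nonneg r]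
  linarith [hb1, hb2, hb2', hfinal]

/-- second-moment bound
`∫₀ᵗ P_s[(P_{t-s} 1_{B(r)})²](x) ds ≤ 3r² · P_t 1_{B(r)}(x)` for `d ≥ 3`, `t ≥ r²`. -/
theorem stmt_8 (d : ℕ) (hd : 3 ≤ d) (r t : ℝ) (hr : 0 < r) (ht : r ^ 2 ≤ t)
    (x : EuclideanSpace ℝ (Fin d)) :
    (∫ s in Set.Ioo (0 : ℝ) t, ∫ y, heatKernel d s x y *
        (∫ z in {z : EuclideanSpace ℝ (Fin d) | ‖z‖ ≤ r}, heatKernel d (t - s) y z) ^ 2) ≤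
      3 * r ^ 2 * ∫ z in {z : EuclideanSpace ℝ (Fin d) | ‖z‖ ≤ r}, heatKernel d t x z := by
  have ht0 : 0 < t := lt_of_lt_of_le (by positivity) ht
  show (∫ s in Set.Ioo (0 : ℝ) t, ∫ y, heatKernel d s x y *
        (∫ z in ballSet d r, heatKernel d (t - s) y z) ^ 2) ≤
      3 * r ^ 2 * ∫ z in ballSet d r, heatKernel d t x z
  set P : ℝ := ∫ z in ballSet d r, heatKernel d t x z with hP
  have hP0 : 0 ≤ P := h_nonneg ht0 x
  have hpoint : ∀ s ∈ Ioo (0:ℝ) t,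
      (∫ y, heatKernel d s x y * (∫ z in ballSet d r, heatKernel d (t - s) y z) ^ 2) ≤
        min 1 (((2*r^2/Real.pi)/(t-s)) ^ ((3:ℝ)/2)) * P := by
    intro s hs
    have hs0 : 0 < s := hs.1
    have hu : 0 < t - s := by linarith [hs.2]
    set Mts : ℝ := min 1 (((2*r^2/Real.pi)/(t-s)) ^ ((3:ℝ)/2)) with hMts
    have hMts0 : 0 ≤ Mts := le_min (by norm_num) (Real.rpow_nonneg (by positivity) _)
    have hg_int : Integrable (fun y => Mts * (heatKernel d s x y *
        ∫ z in ballSet d r, heatKernel d (t-s) y z)) :=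
      (h_mul_integrable hs0 hu hr x).const_mul Mts
    have hstep : (∫ y, heatKernel d s x y *
          (∫ z in ballSet d r, heatKernel d (t - s) y z) ^ 2) ≤
        ∫ y, Mts * (heatKernel d s x y * ∫ z in ballSet d r, heatKernel d (t-s) y z) := by
      refine integral_mono_of_nonneg (Eventually.of_forall fun y => ?_) hg_int
        (Eventually.of_forall fun y => ?_)
      · exact mul_nonneg (hk_nonneg hs0 x y) (sq_nonneg _)
      · have h1 : (∫ z in ballSet d r, heatKernel d (t - s) y z) ^ 2 ≤
            Mts * ∫ z in ballSet d r, heatKernel d (t - s) y z := by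
          rw [sq]
          exact mul_le_mul_of_nonneg_right (h_le_M hd hu hr y) (h_nonneg hu y)
        calc heatKernel d s x y * (∫ z in ballSet d r, heatKernel d (t - s) y z) ^ 2
            ≤ heatKernel d s x y * (Mts * ∫ z in ballSet d r, heatKernel d (t - s) y z) :=
              mul_le_mul_of_nonneg_left h1 (hk_nonneg hs0 x y)
          _ = Mts * (heatKernel d s x y * ∫ z in ballSet d r, heatKernel d (t-s) y z) := by
              ring
    refine le_trans hstep ?_
    rw [integral_const_mul]
    apply mul_le_mul_of_nonneg_left _ hMts0
    rw [fubini_ck hs0 hu hr x]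
    rw [show s + (t - s) = t by ring]
  have hMmeas : Measurable (fun s : ℝ => min 1 (((2*r^2/Real.pi)/(t-s)) ^ ((3:ℝ)/2))) := by
    apply Measurable.min measurable_const
    exact ((Real.continuous_rpow_const (by norm_num)).measurable).comp
      (measurable_const.div (measurable_const.sub measurable_id))
  have hg_int2 : Integrable (fun s => min 1 (((2*r^2/Real.pi)/(t-s)) ^ ((3:ℝ)/2)) * P)
      (volume.restrict (Ioo (0:ℝ) t)) := by
    refine Integrable.mono' (g := fun _ => P)
      (integrableOn_const measure_Ioo_lt_top.ne) ((hMmeas.mul_const P).aestronglyMeasurable.restrict) ?_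
    filter_upwards [ae_restrict_mem measurableSet_Ioo] with s hs
    have hu : 0 < t - s := by linarith [hs.2]
    have h0 : 0 ≤ min 1 (((2*r^2/Real.pi)/(t-s)) ^ ((3:ℝ)/2)) :=
      le_min (by norm_num) (Real.rpow_nonneg (by positivity) _)
    rw [Real.norm_eq_abs, abs_of_nonneg (mul_nonneg h0 hP0)]
    calc min 1 (((2*r^2/Real.pi)/(t-s)) ^ ((3:ℝ)/2)) * P ≤ 1 * P :=
        mul_le_mul_of_nonneg_right (min_le_left _ _) hP0
      _ = P := one_mul P
  have houter : (∫ s in Set.Ioo (0 : ℝ) t, ∫ y, heatKernel d s x y *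
        (∫ z in ballSet d r, heatKernel d (t - s) y z) ^ 2) ≤
      ∫ s in Set.Ioo (0:ℝ) t, min 1 (((2*r^2/Real.pi)/(t-s)) ^ ((3:ℝ)/2)) * P := by
    refine integral_mono_of_nonneg ?_ hg_int2 ?_
    · filter_upwards [ae_restrict_mem measurableSet_Ioo] with s hs
      refine integral_nonneg fun y => ?_
      exact mul_nonneg (hk_nonneg hs.1 x y) (sq_nonneg _)
    · filter_upwards [ae_restrict_mem measurableSet_Ioo] with s hs
      exact hpoint s hs
  refine le_trans houter ?_
  rw [integral_mul_const]
  exact mul_le_mul_of_nonneg_right (time_int hr ht) hP0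
end

section
/- Let d ≥ 3 be an integer and set c(d) := e^{-3/2} 3^{-d/2} v_d / 7. For every r > 0, every x ∈ ℝ^d, and every t ≥ r² such that v_d r^d ≤ r² (2πt)^{d/2}, setting m := ∫_{{y : ‖y‖ ≤ r}} p_t(x,y) dy, one has m/(m + 6r²) ≥ c(d) r^{d-2} (2πt/3)^{-d/2} e^{-3‖x‖²/(2t)}. -/
open MeasureTheory Filter Set Metric
open scoped ENNReal

/-- lower bound for `m/(m+6r²)` where `m = ∫_{B(r)} p_t(x,y) dy`,
with `c(d) = e^{-3/2} 3^{-d/2} v_d / 7`. -/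
theorem stmt_9 (d : ℕ) (hd : 3 ≤ d) (r t : ℝ) (hr : 0 < r) (ht : r ^ 2 ≤ t)
    (x : EuclideanSpace ℝ (Fin d))
    (hvol : unitBallVol d * r ^ d ≤ r ^ 2 * (2 * Real.pi * t) ^ ((d : ℝ) / 2)) :
    (∫ y in {y : EuclideanSpace ℝ (Fin d) | ‖y‖ ≤ r}, heatKernel d t x y) /
        ((∫ y in {y : EuclideanSpace ℝ (Fin d) | ‖y‖ ≤ r}, heatKernel d t x y) + 6 * r ^ 2) ≥
      (Real.exp (-3 / 2) * (3 : ℝ) ^ (-(d : ℝ) / 2) * unitBallVol d / 7) * r ^ (d - 2) *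
        (2 * Real.pi * t / 3) ^ (-(d : ℝ) / 2) * Real.exp (-3 * ‖x‖ ^ 2 / (2 * t)) := by
  have ht0 : 0 < t := lt_of_lt_of_le (by positivity) ht
  have hpi : (0:ℝ) < 2 * Real.pi * t := by positivity
  set P : ℝ := (2 * Real.pi * t) ^ (-(d : ℝ) / 2) with hPdef
  have hPpos : 0 < P := Real.rpow_pos_of_pos hpi _
  set E : ℝ := Real.exp (-3 * ‖x‖ ^ 2 / (2 * t)) with hEdef
  have hEpos : 0 < E := Real.exp_pos _
  have hE1 : E ≤ 1 := Real.exp_le_one_iff.2 (by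
    have h0 : (0:ℝ) ≤ 3 * ‖x‖ ^ 2 / (2 * t) := by positivity
    have he : -3 * ‖x‖ ^ 2 / (2 * t) = -(3 * ‖x‖ ^ 2 / (2 * t)) := by ring
    rw [he]; linarith)
  set c : ℝ := P * (Real.exp (-3/2) * E) with hcdef
  have hcpos : 0 < c := by positivity
  set m : ℝ := ∫ y in {y : EuclideanSpace ℝ (Fin d) | ‖y‖ ≤ r}, heatKernel d t x y with hmdef
  set M : ℝ := unitBallVol d * r ^ d * c with hMdef
  have hvpos : 0 < unitBallVol d := by
    rw [unitBallVol]
    refine ENNReal.toReal_pos (ne_of_gt (measure_ball_pos _ _ one_pos)) measure_ball_lt_top.ne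
  have hMpos : 0 < M := by positivity
  -- the set is the closed ball
  have hset : {y : EuclideanSpace ℝ (Fin d) | ‖y‖ ≤ r} = Metric.closedBall 0 r := by
    ext y; simp [Metric.mem_closedBall, dist_zero_right]
  -- volume of the closed ball
  have hfr : Module.finrank ℝ (EuclideanSpace ℝ (Fin d)) = d := finrank_euclideanSpace_fin
  have hvolball : (volume (Metric.closedBall (0 : EuclideanSpace ℝ (Fin d)) r)).toReal
      = r ^ d * unitBallVol d := by
    rw [Measure.addHaar_closedBall _ _ hr.le, hfr, ENNReal.toReal_mul,
      ENNReal.toReal_ofReal (by positivity)]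
    rfl
  -- lower bound M ≤ m
  have hMm : M ≤ m := by
    have hcont : ContinuousOn (heatKernel d t x)
        (Metric.closedBall (0 : EuclideanSpace ℝ (Fin d)) r) := by
      apply Continuous.continuousOn
      unfold heatKernel
      fun_prop
    have hint : IntegrableOn (heatKernel d t x)
        (Metric.closedBall (0 : EuclideanSpace ℝ (Fin d)) r) volume :=
      hcont.integrableOn_compact (isCompact_closedBall _ _)
    have hbd : ∀ y ∈ Metric.closedBall (0 : EuclideanSpace ℝ (Fin d)) r,
        c ≤ heatKernel d t x y := by
      intro y hy
      rw [Metric.mem_closedBall, dist_zero_right] at hy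
      unfold heatKernel
      rw [← hPdef, hcdef]
      refine mul_le_mul_of_nonneg_left ?_ hPpos.le
      rw [hEdef, ← Real.exp_add]
      apply Real.exp_le_exp.2
      have hxy : ‖x - y‖ ≤ ‖x‖ + ‖y‖ := norm_sub_le x y
      have hxy2 : ‖x - y‖ ^ 2 ≤ 3 * ‖x‖ ^ 2 + 3 * t := by
        nlinarith [norm_nonneg (x - y), norm_nonneg x, norm_nonneg y, sq_nonneg (‖x‖ - ‖y‖),
          hy, hr.le, ht]
      rw [← sub_nonneg]
      have heq : -‖x - y‖ ^ 2 / (2 * t) - (-3 / 2 + -3 * ‖x‖ ^ 2 / (2 * t))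
          = (3 * t + 3 * ‖x‖ ^ 2 - ‖x - y‖ ^ 2) / (2 * t) := by
        field_simp; ring
      rw [heq]
      apply div_nonneg (by linarith) (by positivity)
    have := setIntegral_ge_of_const_le (measurableSet_closedBall)
      (measure_closedBall_lt_top).ne hbd hint
    rw [measureReal_def, hvolball, smul_eq_mul, mul_comm] at this
    calc M = c * (r ^ d * unitBallVol d) := by rw [hMdef]; ring
      _ ≤ _ := this
      _ = m := by rw [hmdef, hset]
  -- M ≤ r^2
  have hMr : M ≤ r ^ 2 := by
    have h1 : Real.exp (-3/2) * E ≤ 1 := by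
      have := Real.exp_le_one_iff.2 (by norm_num : (-3/2 : ℝ) ≤ 0)
      nlinarith
    have h2 : M ≤ unitBallVol d * r ^ d * P := by
      rw [hMdef, hcdef]
      have hb : (0:ℝ) ≤ unitBallVol d * r ^ d * P := by positivity
      calc unitBallVol d * r ^ d * (P * (Real.exp (-3/2) * E))
          = (unitBallVol d * r ^ d * P) * (Real.exp (-3/2) * E) := by ring
        _ ≤ (unitBallVol d * r ^ d * P) * 1 := mul_le_mul_of_nonneg_left h1 hb
        _ = unitBallVol d * r ^ d * P := by ring
    have h3 : unitBallVol d * r ^ d * P ≤ r ^ 2 := by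
      have hPinv : P = ((2 * Real.pi * t) ^ ((d : ℝ) / 2))⁻¹ := by
        rw [hPdef, neg_div, Real.rpow_neg hpi.le]
      rw [hPinv, mul_inv_le_iff₀ (Real.rpow_pos_of_pos hpi _)]
      linarith [hvol]
    linarith
  have hm0 : 0 < m := lt_of_lt_of_le hMpos hMm
  -- key inequality
  have key : M / (7 * r ^ 2) ≤ m / (m + 6 * r ^ 2) := by
    rw [div_le_div_iff₀ (by positivity) (by positivity)]
    nlinarith [hMm, hMr, hMpos, hm0, sq_nonneg r]
  -- identify RHS with M / (7 r²)
  have hrw : (Real.exp (-3 / 2) * (3 : ℝ) ^ (-(d : ℝ) / 2) * unitBallVol d / 7) * r ^ (d - 2) *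
        (2 * Real.pi * t / 3) ^ (-(d : ℝ) / 2) * E = M / (7 * r ^ 2) := by
    have h3 : (2 * Real.pi * t / 3 : ℝ) ^ (-(d : ℝ) / 2)
        = P / (3 : ℝ) ^ (-(d : ℝ) / 2) := by
      rw [hPdef, Real.div_rpow hpi.le (by norm_num : (0:ℝ) ≤ 3)]
    have h3ne : ((3 : ℝ) ^ (-(d : ℝ) / 2)) ≠ 0 :=
      (Real.rpow_pos_of_pos (by norm_num) _).ne'
    have hpow : r ^ d = r ^ (d - 2) * r ^ 2 := by
      rw [← pow_add]; congr 1; omega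
    rw [h3, hMdef, hcdef, hpow]
    field_simp
  rw [ge_iff_le, hrw]
  exact key
end
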